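/- Let O be a discrete valuation ring with maximal ideal p and fraction field k, and let (ν_{ij}) be an n×n integer matrix with ν_{ii} = 0 for all i. Then the O-submodule S = {A ∈ M_n(k) : A_{ij} ∈ p^{ν_{ij}} for all i,j} is an O-order in M_n(k) if and only if ν_{ik} + ν_{kj} ≥ ν_{ij} for all i, j, k. -/

import Mathlib

noncomputable section

/-- The fractional ideal `p^ν = π^ν O` inside `k`. -/
def pset (O : Type*) [CommRing O] {k : Type*} [Field k] [Algebra O k] (π : k) (ν : ℤ) :
    Set k := {x : k | ∃ c : O, x = algebraMap O k c * π ^ ν}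

/-- An `O`-order in `M_n(k)`: a subalgebra which is finitely generated as an `O`-module
and is a full lattice (every matrix has a nonzero `O`-multiple in it). -/
def IsOrder (O : Type*) [CommRing O] {k : Type*} [Field k] [Algebra O k] {n : ℕ}
    (S : Subalgebra O (Matrix (Fin n) (Fin n) k)) : Prop :=
  (Subalgebra.toSubmodule S).FG ∧
    ∀ A : Matrix (Fin n) (Fin n) k, ∃ c : O, c ≠ 0 ∧ algebraMap O k c • A ∈ S

/-- A subset of `M_n(k)` is an `O`-order if it is the underlying set of an order. -/
def IsOrderSet (O : Type*) [CommRing O] {k : Type*} [Field k] [Algebra O k] {n : ℕ}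
    (s : Set (Matrix (Fin n) (Fin n) k)) : Prop :=
  ∃ S : Subalgebra O (Matrix (Fin n) (Fin n) k),
    (S : Set (Matrix (Fin n) (Fin n) k)) = s ∧ IsOrder O S

/-- The maximal order `Λ(m₁,…,m_n) = {A : A_{ij} ∈ p^{m_i - m_j}}`. -/
def Lam (O : Type*) [CommRing O] {k : Type*} [Field k] [Algebra O k] {n : ℕ} (π : k)
    (m : Fin n → ℤ) : Set (Matrix (Fin n) (Fin n) k) :=
  {A | ∀ i j, A i j ∈ pset O π (m i - m j)}

/-- A maximal `O`-order. -/
def IsMaximalOrder (O : Type*) [CommRing O] {k : Type*} [Field k] [Algebra O k] {n : ℕ}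
    (S : Subalgebra O (Matrix (Fin n) (Fin n) k)) : Prop :=
  IsOrder O S ∧ ∀ T : Subalgebra O (Matrix (Fin n) (Fin n) k), IsOrder O T → S ≤ T → T = S

/-- `m` is an integer point of the convex polytope `C(ν)` (in the hyperplane `x₁ = 0`). -/
def IntPt {n : ℕ} [NeZero n] (ν : Matrix (Fin n) (Fin n) ℤ) (m : Fin n → ℤ) : Prop :=
  m 0 = 0 ∧ ∀ i j, -ν j i ≤ m i - m j ∧ m i - m j ≤ ν i j

/-- `ν` is reduced: `C(ν)` contains an integer point and every bounding hyperplane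
`x_i - x_j = ν_{ij}` contains an integer point of `C(ν)`. -/
def Reduced {n : ℕ} [NeZero n] (ν : Matrix (Fin n) (Fin n) ℤ) : Prop :=
  (∃ m, IntPt ν m) ∧ ∀ i j, ∃ m, IntPt ν m ∧ m i - m j = ν i j


set_option linter.unusedSectionVars false
set_option maxHeartbeats 800000

section helpers
variable {O : Type*} [CommRing O] [IsDomain O] [IsDiscreteValuationRing O]
  {k : Type*} [Field k] [Algebra O k] [IsFractionRing O k]
  {ϖ : O} (hϖ : Irreducible ϖ) {π : k} (hπ : π = algebraMap O k ϖ)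

omit [IsDomain O] [IsDiscreteValuationRing O] [IsFractionRing O k] in
lemma pset_eq_span' (ν : ℤ) :
    pset O π ν = (Submodule.span O {π ^ ν} : Submodule O k) := by
  ext x
  simp [pset, Submodule.mem_span_singleton, Algebra.smul_def, eq_comm]

include hϖ hπ

lemma pi_ne_zero : π ≠ 0 := by
  rw [hπ]
  simpa using (map_ne_zero_iff _ (IsFractionRing.injective O k)).2 hϖ.ne_zero

lemma pi_zpow_nonneg (m : ℤ) (hm : 0 ≤ m) : π ^ m = algebraMap O k (ϖ ^ m.toNat) := by
  rw [hπ, map_pow, ← zpow_natCast, Int.toNat_of_nonneg hm]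

lemma pset_mul_mem {a b : ℤ} {x y : k} (hx : x ∈ pset O π a) (hy : y ∈ pset O π b) :
    x * y ∈ pset O π (a + b) := by
  obtain ⟨c, rfl⟩ := hx; obtain ⟨d, rfl⟩ := hy
  exact ⟨c * d, by rw [map_mul, zpow_add₀ (pi_ne_zero hϖ hπ)]; ring⟩

lemma pset_mono {a b : ℤ} (hab : b ≤ a) : pset O π a ⊆ pset O π b := by
  rintro x ⟨c, rfl⟩
  refine ⟨c * ϖ ^ (a - b).toNat, ?_⟩
  have e : algebraMap O k (ϖ ^ (a - b).toNat) = π ^ (a - b) :=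
    (pi_zpow_nonneg hϖ hπ (a - b) (by omega)).symm
  rw [map_mul, e, mul_assoc, ← zpow_add₀ (pi_ne_zero hϖ hπ)]
  have : a - b + b = a := by omega
  rw [this]

lemma pset_pow_mem {a b : ℤ} (h : π ^ a ∈ pset O π b) : b ≤ a := by
  by_contra hab
  push_neg at hab
  obtain ⟨c, hc⟩ := h
  have hne := pi_ne_zero hϖ hπ
  have h1 : algebraMap O k c * π ^ (b - a) = 1 := by
    have e : π ^ b * π ^ (-a) = π ^ (b - a) := by rw [← zpow_add₀ hne, ← sub_eq_add_neg]
    have e2 : π ^ a * π ^ (-a) = 1 := by rw [← zpow_add₀ hne, add_neg_cancel, zpow_zero]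
    calc algebraMap O k c * π ^ (b - a) = (algebraMap O k c * π ^ b) * π ^ (-a) := by
            rw [← e]; ring
      _ = π ^ a * π ^ (-a) := by rw [hc]
      _ = 1 := e2
  rw [pi_zpow_nonneg hϖ hπ (b - a) (by omega), ← map_mul, ← map_one (algebraMap O k)] at h1
  have h2 := IsFractionRing.injective O k h1
  have hd : ϖ ∣ (1 : O) :=
    h2 ▸ Dvd.dvd.mul_left (dvd_pow_self ϖ (by omega : (b - a).toNat ≠ 0)) c
  exact hϖ.not_isUnit (isUnit_of_dvd_one hd)

end helpers

section main
variable {n : ℕ} {O : Type*} [CommRing O] [IsDomain O] [IsDiscreteValuationRing O]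
  {k : Type*} [Field k] [Algebra O k] [IsFractionRing O k]
  {ϖ : O} (hϖ : Irreducible ϖ) {π : k} (hπ : π = algebraMap O k ϖ)
  (ν : Matrix (Fin n) (Fin n) ℤ)

lemma stdBasis_mem (p q : Fin n) :
    Matrix.single p q (π ^ ν p q) ∈
      {A : Matrix (Fin n) (Fin n) k | ∀ i j, A i j ∈ pset O π (ν i j)} := by
  intro a b
  by_cases hab : p = a ∧ q = b
  · obtain ⟨rfl, rfl⟩ := hab
    exact ⟨1, by simp [Matrix.single]⟩
  · refine ⟨0, ?_⟩
    simp only [Matrix.single, Matrix.of_apply, if_neg hab, map_zero, zero_mul]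

include hϖ hπ

/-- The candidate order as a subalgebra, given the triangle inequality. -/
def orderAlg (hdiag : ∀ i, ν i i = 0) (h : ∀ i j l : Fin n, ν i j + ν j l ≥ ν i l) :
    Subalgebra O (Matrix (Fin n) (Fin n) k) where
  carrier := {A : Matrix (Fin n) (Fin n) k | ∀ i j, A i j ∈ pset O π (ν i j)}
  add_mem' := by
    intro A B hA hB i j
    obtain ⟨c, hc⟩ := hA i j; obtain ⟨d, hd⟩ := hB i j
    exact ⟨c + d, by rw [Matrix.add_apply, hc, hd, map_add]; ring⟩
  mul_mem' := by
    intro A B hA hB i j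
    rw [Matrix.mul_apply, pset_eq_span', SetLike.mem_coe]
    refine Submodule.sum_mem _ fun m _ => ?_
    rw [← SetLike.mem_coe, ← pset_eq_span']
    exact pset_mono hϖ hπ (h i m j) (pset_mul_mem hϖ hπ (hA i m) (hB m j))
  one_mem' := by
    intro i j
    by_cases hij : i = j
    · subst hij
      exact ⟨1, by simp [Matrix.one_apply_eq, hdiag]⟩
    · exact ⟨0, by simp [Matrix.one_apply_ne hij]⟩
  zero_mem' := fun i j => ⟨0, by simp⟩
  algebraMap_mem' := by
    intro r i j
    by_cases hij : i = j
    · subst hij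
      exact ⟨r, by simp [Matrix.algebraMap_matrix_apply, hdiag]⟩
    · exact ⟨0, by simp [Matrix.algebraMap_matrix_apply, hij]⟩

theorem stmt2' (hdiag : ∀ i, ν i i = 0) :
    IsOrderSet O {A : Matrix (Fin n) (Fin n) k | ∀ i j, A i j ∈ pset O π (ν i j)} ↔
      ∀ i j l : Fin n, ν i j + ν j l ≥ ν i l := by
  constructor
  · rintro ⟨S, hS, -⟩ i j l
    have hmem : ∀ (p q : Fin n), Matrix.single p q (π ^ ν p q) ∈ S := fun p q => by
      rw [← SetLike.mem_coe, hS]; exact stdBasis_mem ν p q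
    have hmul := S.mul_mem (hmem i j) (hmem j l)
    rw [← SetLike.mem_coe, hS, Matrix.single_mul_single_same] at hmul
    have h2 := hmul i l
    rw [Matrix.single_apply_same, ← zpow_add₀ (pi_ne_zero hϖ hπ)] at h2
    exact pset_pow_mem hϖ hπ h2
  · intro h
    refine ⟨orderAlg hϖ hπ ν hdiag h, rfl, ?_, ?_⟩
    · -- FG
      classical
      refine ⟨Finset.univ.image
        (fun p : Fin n × Fin n => Matrix.single p.1 p.2 (π ^ ν p.1 p.2)), ?_⟩
      apply le_antisymm
      · rw [Submodule.span_le]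
        intro x hx
        simp only [Finset.coe_image, Finset.coe_univ, Set.image_univ, Set.mem_range] at hx
        obtain ⟨p, rfl⟩ := hx
        exact stdBasis_mem ν p.1 p.2
      · intro A hA
        have hA' : ∀ i j, A i j ∈ pset O π (ν i j) := hA
        rw [Matrix.matrix_eq_sum_single A]
        refine Submodule.sum_mem _ fun i _ => Submodule.sum_mem _ fun j _ => ?_
        obtain ⟨c, hc⟩ := hA' i j
        have he : Matrix.single i j (A i j) =
            c • Matrix.single i j (π ^ ν i j) := by
          rw [Matrix.smul_single, hc, Algebra.smul_def]
        rw [he]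
        refine Submodule.smul_mem _ c (Submodule.subset_span ?_)
        simp only [Finset.coe_image, Finset.coe_univ, Set.image_univ, Set.mem_range]
        exact ⟨(i, j), rfl⟩
    · -- full lattice
      intro A
      obtain ⟨b, hb⟩ := IsLocalization.exist_integer_multiples_of_finite
        (nonZeroDivisors O) (fun p : Fin n × Fin n => A p.1 p.2)
      classical
      set N : ℕ := Finset.univ.sup (fun p : Fin n × Fin n => (ν p.1 p.2).toNat) with hN
      refine ⟨ϖ ^ N * (b : O), mul_ne_zero (pow_ne_zero _ hϖ.ne_zero)
        (nonZeroDivisors.ne_zero b.2), ?_⟩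
      intro i j
      obtain ⟨d, hd⟩ := hb (i, j)
      have hd' : algebraMap O k d = algebraMap O k (b : O) * A i j := by
        rw [hd]; rw [Algebra.smul_def]
      have hNij : ν i j ≤ (N : ℤ) := by
        have h1 : (ν i j).toNat ≤ N := Finset.le_sup (f := fun p : Fin n × Fin n => (ν p.1 p.2).toNat) (Finset.mem_univ (i, j))
        omega
      refine pset_mono hϖ hπ hNij ⟨d, ?_⟩
      have hπN : π ^ (N : ℤ) = algebraMap O k (ϖ ^ N) := by
        rw [pi_zpow_nonneg hϖ hπ (N : ℤ) (Int.natCast_nonneg N), Int.toNat_natCast]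
      rw [Matrix.smul_apply, smul_eq_mul, hπN, map_mul, map_pow, hd']
      ring
end main

/-- `S = (p^{ν_{ij}})` with zero diagonal is an `O`-order iff
`ν_{ik} + ν_{kj} ≥ ν_{ij}` for all `i, j, k`. -/
theorem stmt2 {n : ℕ} {O : Type*} [CommRing O] [IsDomain O] [IsDiscreteValuationRing O]
{k : Type*} [Field k] [Algebra O k] [IsFractionRing O k]
    (ϖ : O) (hϖ : Irreducible ϖ) (π : k) (hπ : π = algebraMap O k ϖ)
    (ν : Matrix (Fin n) (Fin n) ℤ) (hdiag : ∀ i, ν i i = 0) :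
    IsOrderSet O {A : Matrix (Fin n) (Fin n) k | ∀ i j, A i j ∈ pset O π (ν i j)} ↔
      ∀ i j l : Fin n, ν i j + ν j l ≥ ν i l := by
  exact stmt2' hϖ hπ ν hdiag
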